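/- In the multiplicative-hardness instance with parameter ε ∈ (0, 1/4) and bound H ≥ 1, every H-bounded contract yields principal's expected utility strictly less than 3ε. Consequently, for any α > 1, choosing ε < e^{−3α} gives OPT_H < OPT/α since OPT ≥ ε(1 + ln(1/ε)) > 3αε > α·OPT_H. -/

import Mathlib

set_option maxHeartbeats 1000000

/-- In the multiplicative-hardness instance, every `H`-bounded contract
yields principal's expected utility strictly less than `3ε`; consequently, for any
`α > 1`, choosing `ε < e^{−3α}` gives `3αε < ε(1 + ln(1/ε))` (so `OPT_H < OPT/α`). -/
theorem hardness_multiplicative (ε H : ℝ) (hε : ε ∈ Set.Ioo (0 : ℝ) (1 / 4)) (hH : 1 ≤ H)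
    (p₁ p₂ : ℝ) (hp₁ : p₁ ∈ Set.Icc 0 H) (hp₂ : p₂ ∈ Set.Icc 0 H)
    (a : ℝ) (ha : a ∈ Set.Icc 0 (Real.log (1 / ε)))
    -- a is the agent's best response to the contract (0, p₁, p₂)
    (hbr : ∀ a' ∈ Set.Icc 0 (Real.log (1 / ε)),
      ε * Real.exp a' * p₁
          + (ε ^ 2 / (2 * H)) * (Real.exp a' - 1 - a') * (p₂ - p₁)
          - ε * (Real.exp a' - 1 - a')
        ≤ ε * Real.exp a * p₁
          + (ε ^ 2 / (2 * H)) * (Real.exp a - 1 - a) * (p₂ - p₁)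
          - ε * (Real.exp a - 1 - a)) :
    (ε * Real.exp a * (1 - p₁)
        + (ε ^ 2 / (2 * H)) * (Real.exp a - 1 - a) * (p₁ - p₂) < 3 * ε) ∧
    (∀ α : ℝ, 1 < α → ε < Real.exp (-(3 * α)) →
      α * (3 * ε) < ε * (1 + Real.log (1 / ε))) := by
  obtain ⟨hε0, hε4⟩ := hε
  obtain ⟨ha0, haL⟩ := ha
  have hH0 : (0:ℝ) < H := by linarith
  constructor
  · obtain ⟨y, hy⟩ : ∃ y : ℝ, y * (2 * H) = ε * (p₂ - p₁) :=
      ⟨ε * (p₂ - p₁) / (2 * H), by field_simp⟩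
    have hyub : y ≤ ε / 2 := by nlinarith [hp₂.2, hp₁.1]
    have hylb : -(ε / 2) ≤ y := by nlinarith [hp₁.2, hp₂.1]
    have hflip : ∀ t u : ℝ, (ε ^ 2 / (2 * H)) * (Real.exp t - 1 - u) * (p₂ - p₁)
        = ε * y * (Real.exp t - 1 - u) := by
      intro t u
      have h2H : (2:ℝ) * H ≠ 0 := by positivity
      refine mul_right_cancel₀ h2H ?_
      have hA : ε ^ 2 / (2 * H) * (2 * H) = ε ^ 2 := div_mul_cancel₀ _ h2H
      linear_combination (-(ε * (Real.exp t - 1 - u))) * hy + ((Real.exp t - 1 - u) * (p₂ - p₁)) * hA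
    have hEApos : 0 < Real.exp a := Real.exp_pos a
    have hEAge : 1 + a ≤ Real.exp a := by linarith [Real.add_one_le_exp a]
    have hE0 : 0 ≤ Real.exp a - 1 - a := by linarith
    have hEAle : ε * Real.exp a ≤ 1 := by
      have h1 : Real.exp a ≤ 1 / ε := by
        calc Real.exp a ≤ Real.exp (Real.log (1/ε)) := Real.exp_le_exp.mpr haL
          _ = 1/ε := Real.exp_log (by positivity)
      calc ε * Real.exp a ≤ ε * (1/ε) := by nlinarith
        _ = 1 := by field_simp
    have hEle : ε * (Real.exp a - 1 - a) ≤ 1 := by nlinarith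
    have hre : (ε ^ 2 / (2 * H)) * (Real.exp a - 1 - a) * (p₁ - p₂)
        = -(ε * y * (Real.exp a - 1 - a)) := by
      have := hflip a a
      linarith [this]
    rw [hre]
    have hterm2 : -(ε * y * (Real.exp a - 1 - a)) ≤ ε / 2 := by
      nlinarith [mul_nonneg (by linarith : (0:ℝ) ≤ y + ε/2) (mul_nonneg hε0.le hE0)]
    by_cases hcase : 1 - ε ≤ p₁
    · have hterm1 : ε * Real.exp a * (1 - p₁) ≤ ε := by
        rcases le_or_gt p₁ 1 with h1 | h1
        · nlinarith
        · nlinarith [mul_pos (mul_pos hε0 hEApos) (by linarith : (0:ℝ) < p₁ - 1)]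
      linarith
    · push_neg at hcase
      have hp10 := hp₁.1
      have hb0 : 0 < 1 - p₁ - y := by linarith
      have hc0 : 0 < 1 - y := by linarith
      have hcb1 : 1 ≤ (1 - y) / (1 - p₁ - y) := by
        rw [le_div_iff₀ hb0]; linarith
      obtain ⟨a₀, ha₀0, hexpa₀⟩ : ∃ a₀ : ℝ, 0 ≤ a₀ ∧
          Real.exp a₀ = (1 - y) / (1 - p₁ - y) :=
        ⟨Real.log ((1 - y) / (1 - p₁ - y)), Real.log_nonneg hcb1,
          Real.exp_log (by positivity)⟩
      have hbE0 : (1 - p₁ - y) * Real.exp a₀ = 1 - y := by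
        rw [hexpa₀]; field_simp
      have hkey : (1 - p₁ - y) * Real.exp a ≤ 1 - y := by
        by_cases h₀ : a₀ ≤ Real.log (1 / ε)
        · have h := hbr a₀ ⟨ha₀0, h₀⟩
          rw [hflip a₀ a₀, hflip a a] at h
          have hEXeq : Real.exp a = Real.exp a₀ * Real.exp (a - a₀) := by
            rw [← Real.exp_add]; ring_nf
          have hEXge : 1 + (a - a₀) ≤ Real.exp (a - a₀) := by
            linarith [Real.add_one_le_exp (a - a₀)]
          rw [hEXeq] at h
          have hid : ε * (Real.exp a₀ * Real.exp (a - a₀)) * p₁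
              + ε * y * (Real.exp a₀ * Real.exp (a - a₀) - 1 - a)
              - ε * (Real.exp a₀ * Real.exp (a - a₀) - 1 - a)
              - (ε * Real.exp a₀ * p₁ + ε * y * (Real.exp a₀ - 1 - a₀)
                  - ε * (Real.exp a₀ - 1 - a₀))
              = -(ε * ((1 - y) * (Real.exp (a - a₀) - 1 - (a - a₀)))) := by
            linear_combination (-(ε * (Real.exp (a - a₀) - 1))) * hbE0
          have hprod : ε * ((1 - y) * (Real.exp (a - a₀) - 1 - (a - a₀))) ≤ 0 := by
            linarith [h, hid]
          have hder : Real.exp (a - a₀) - 1 - (a - a₀) ≤ 0 := by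
            by_contra hgt
            push_neg at hgt
            nlinarith [mul_pos hε0 (mul_pos hc0 hgt)]
          have hx0 : a - a₀ = 0 := by
            by_contra hne
            have := Real.add_one_lt_exp hne
            linarith
          have hEX1 : Real.exp (a - a₀) = 1 := by rw [hx0, Real.exp_zero]
          rw [hEXeq, hEX1, mul_one]
          linarith [hbE0]
        · push_neg at h₀
          have h1 : Real.exp a < Real.exp a₀ :=
            Real.exp_lt_exp.mpr (lt_of_le_of_lt haL h₀)
          nlinarith [hbE0, mul_lt_mul_of_pos_left h1 hb0]
      have hc2b : (1 - y) * (1 - p₁) ≤ 2 * (1 - p₁ - y) := by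
        rcases le_or_gt 0 y with hy0 | hy0
        · nlinarith
        · nlinarith
      have hterm1 : ε * Real.exp a * (1 - p₁) ≤ 2 * ε := by
        have h1p : (0:ℝ) ≤ 1 - p₁ := by linarith
        have h1' : (1 - p₁ - y) * (Real.exp a * (1 - p₁)) ≤ (1 - p₁ - y) * 2 := by
          nlinarith [mul_le_mul_of_nonneg_right hkey h1p]
        have h2 : Real.exp a * (1 - p₁) ≤ 2 := le_of_mul_le_mul_left h1' hb0
        nlinarith [mul_le_mul_of_nonneg_left h2 hε0.le]
      linarith
  · intro α hα hεα
    have hL : 3 * α < Real.log (1 / ε) := by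
      rw [one_div, Real.log_inv]
      have : Real.log ε < -(3 * α) := (Real.log_lt_iff_lt_exp hε0).mpr hεα
      linarith
    nlinarith
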